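/- Let f, g : [0,1] → [0,1] be continuous, strictly increasing, piecewise monomial bijections with f(0)=g(0)=0 and f(1)=g(1)=1, such that every piece of f has positive integer degree and every piece of g has positive integer degree. Then the composition g ∘ f is a continuous, strictly increasing, piecewise monomial bijection of [0,1] with integer degrees, and for every point s in the interior, the left degree satisfies deg⁻_{g∘f}(s) = deg⁻_g(f(s)) · deg⁻_f(s). -/

import Mathlib

/-- `f` is piecewise monomial on `[0,1]`: there is a finite subdivision
`0 = t₀ < t₁ < ⋯ < tₙ = 1` such that on each piece `f` has the form
`t ↦ α·t^d` with `α > 0` and `d` a positive integer. -/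
def PiecewiseMonomialOn (f : ℝ → ℝ) : Prop :=
  ∃ (n : ℕ) (t : ℕ → ℝ) (α : ℕ → ℝ) (d : ℕ → ℕ),
    1 ≤ n ∧ t 0 = 0 ∧ t n = 1 ∧ (∀ i < n, t i < t (i + 1)) ∧
    (∀ i < n, 0 < α (i + 1) ∧ 0 < d (i + 1)) ∧
    (∀ i < n, ∀ s ∈ Set.Icc (t i) (t (i + 1)), f s = α (i + 1) * s ^ d (i + 1))

/-- `f` has left degree `d` at the interior point `s`: immediately to the left
of `s`, `f` is given by a monomial of degree `d`. -/
def HasLeftDegreeAt (f : ℝ → ℝ) (s : ℝ) (d : ℕ) : Prop :=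
  ∃ (α ε : ℝ), 0 < α ∧ 0 < ε ∧ ∀ u ∈ Set.Icc (s - ε) s, f u = α * u ^ d

private lemma exists_piece {t : ℕ → ℝ} {n : ℕ} (hmono : ∀ i < n, t i < t (i + 1)) {a : ℝ}
    (h0 : t 0 ≤ a) (h1 : a < t n) : ∃ i < n, t i ≤ a ∧ a < t (i + 1) := by
  induction n with
  | zero => exact absurd (h0.trans_lt h1) (lt_irrefl _)
  | succ n ih =>
    by_cases h : a < t n
    · obtain ⟨i, hi, h⟩ := ih (fun i hi => hmono i (hi.trans (Nat.lt_succ_self n))) h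
      exact ⟨i, hi.trans (Nat.lt_succ_self n), h⟩
    · exact ⟨n, Nat.lt_succ_self n, not_lt.1 h, h1⟩

private lemma piece_mono {t : ℕ → ℝ} {n : ℕ} (hmono : ∀ i < n, t i < t (i + 1)) :
    ∀ {i j}, i ≤ j → j ≤ n → t i ≤ t j := by
  intro i j hij hjn
  induction j, hij using Nat.le_induction with
  | base => exact le_refl _
  | succ j hj ih =>
    exact (ih (le_of_lt (Nat.lt_of_succ_le hjn))).trans
      (le_of_lt (hmono j (Nat.lt_of_succ_le hjn)))

/-- Compositions of continuous strictly increasing piecewise monomial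
bijections of `[0,1]` (with positive integer degrees) are again such, and left
degrees are multiplicative: `deg⁻_{g∘f}(s) = deg⁻_g(f(s)) · deg⁻_f(s)`. -/
theorem piecewise_monomial_comp
    (f g : ℝ → ℝ)
    (hfp : PiecewiseMonomialOn f) (hgp : PiecewiseMonomialOn g)
    (hfc : ContinuousOn f (Set.Icc 0 1)) (hgc : ContinuousOn g (Set.Icc 0 1))
    (hfm : StrictMonoOn f (Set.Icc 0 1)) (hgm : StrictMonoOn g (Set.Icc 0 1))
    (hf0 : f 0 = 0) (hf1 : f 1 = 1) (hg0 : g 0 = 0) (hg1 : g 1 = 1)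
    (hfb : Set.BijOn f (Set.Icc 0 1) (Set.Icc 0 1))
    (hgb : Set.BijOn g (Set.Icc 0 1) (Set.Icc 0 1)) :
    PiecewiseMonomialOn (g ∘ f) ∧
    ContinuousOn (g ∘ f) (Set.Icc 0 1) ∧
    StrictMonoOn (g ∘ f) (Set.Icc 0 1) ∧
    Set.BijOn (g ∘ f) (Set.Icc 0 1) (Set.Icc 0 1) ∧
    (∀ s ∈ Set.Ioo (0 : ℝ) 1, ∀ df dg : ℕ,
      HasLeftDegreeAt f s df → HasLeftDegreeAt g (f s) dg →
      HasLeftDegreeAt (g ∘ f) s (dg * df)) := by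
  obtain ⟨n, t, α, d, hn, ht0, htn, htlt, hαd, hmf⟩ := hfp
  obtain ⟨m, u, β, e, hm, hu0, hum, hult, hβe, hmg⟩ := hgp
  -- the set of breakpoints of g ∘ f
  set S : Set ℝ := Set.Icc 0 1 ∩ (t '' Set.Iic n ∪ f ⁻¹' (u '' Set.Iic m)) with hS
  have hSsub : S ⊆ Set.Icc 0 1 := Set.inter_subset_left
  have hSfin : S.Finite := by
    have h1 : (t '' Set.Iic n).Finite := (Set.finite_Iic n).image t
    have h2 : (Set.Icc (0:ℝ) 1 ∩ f ⁻¹' (u '' Set.Iic m)).Finite := by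
      apply Set.Finite.of_finite_image (f := f)
      · exact ((Set.finite_Iic m).image u).subset
          (by intro y hy; obtain ⟨x, hx, rfl⟩ := hy; exact hx.2)
      · exact hfb.injOn.mono Set.inter_subset_left
    have : S ⊆ (t '' Set.Iic n) ∪ (Set.Icc (0:ℝ) 1 ∩ f ⁻¹' (u '' Set.Iic m)) := by
      rintro x ⟨hx1, hx2 | hx2⟩
      · exact Or.inl hx2
      · exact Or.inr ⟨hx1, hx2⟩
    exact (h1.union h2).subset this
  have h0S : (0 : ℝ) ∈ S := ⟨Set.mem_Icc.2 ⟨le_refl _, zero_le_one⟩,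
    Or.inl ⟨0, Set.mem_Iic.2 (Nat.zero_le n), ht0⟩⟩
  have h1S : (1 : ℝ) ∈ S := ⟨Set.mem_Icc.2 ⟨zero_le_one, le_refl _⟩,
    Or.inl ⟨n, Set.mem_Iic.2 (le_refl n), htn⟩⟩
  set l : List ℝ := hSfin.toFinset.sort (· ≤ ·) with hl
  have hmem : ∀ x : ℝ, x ∈ l ↔ x ∈ S := by
    intro x; rw [hl, Finset.mem_sort, Set.Finite.mem_toFinset]
  have hsorted : l.SortedLT := hSfin.toFinset.sortedLT_sort
  have h0l : (0:ℝ) ∈ l := (hmem 0).2 h0S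
  have h1l : (1:ℝ) ∈ l := (hmem 1).2 h1S
  have hlen : 2 ≤ l.length := by
    rcases l with _ | ⟨a, _ | ⟨b, l⟩⟩
    · simp at h0l
    · simp at h0l h1l; rw [← h0l] at h1l; norm_num at h1l
    · simp
  set N : ℕ := l.length - 1 with hN
  have hN1 : 1 ≤ N := by omega
  set T : ℕ → ℝ := fun k => l.getD k 0 with hT
  have hTget : ∀ k (hk : k < l.length), T k = l.get ⟨k, hk⟩ := by
    intro k hk; rw [hT]; simp only [List.get_eq_getElem]; exact List.getD_eq_getElem l 0 hk
  have hTmem : ∀ k, k < l.length → T k ∈ S := by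
    intro k hk; rw [hTget k hk]; exact (hmem _).1 (List.get_mem l ⟨k, hk⟩)
  have hstrict := hsorted.strictMono_get
  have hTlt : ∀ i < N, T i < T (i + 1) := by
    intro i hi
    rw [hTget i (by omega), hTget (i+1) (by omega)]
    exact hstrict (by simp [Fin.lt_def])
  have hT0 : T 0 = 0 := by
    obtain ⟨j, hj⟩ := List.mem_iff_get.1 h0l
    have h1 : T 0 ≤ 0 := by
      rw [hTget 0 (by omega), ← hj]
      exact hstrict.monotone (Fin.mk_le_mk.2 (Nat.zero_le _))
    have h2 : (0:ℝ) ≤ T 0 := (hSsub (hTmem 0 (by omega))).1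
    linarith
  have hTN : T N = 1 := by
    obtain ⟨j, hj⟩ := List.mem_iff_get.1 h1l
    have h1 : (1:ℝ) ≤ T N := by
      rw [hTget N (by omega), ← hj]
      exact hstrict.monotone (Fin.mk_le_mk.2 (by omega))
    have h2 : T N ≤ 1 := (hSsub (hTmem N (by omega))).2
    linarith
  -- no breakpoint strictly inside a piece
  have hgap : ∀ k < N, ∀ x ∈ S, ¬(T k < x ∧ x < T (k + 1)) := by
    intro k hk x hx ⟨hx1, hx2⟩
    obtain ⟨j, hj⟩ := List.mem_iff_get.1 ((hmem x).2 hx)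
    rw [hTget k (by omega), ← hj] at hx1
    rw [hTget (k+1) (by omega), ← hj] at hx2
    have := hstrict.lt_iff_lt.1 hx1
    have := hstrict.lt_iff_lt.1 hx2
    simp [Fin.lt_def] at *; omega
  -- on each piece, g ∘ f is a monomial
  have key : ∀ k < N, ∃ p : ℝ × ℕ, 0 < p.1 ∧ 0 < p.2 ∧
      ∀ s ∈ Set.Icc (T k) (T (k + 1)), (g ∘ f) s = p.1 * s ^ p.2 := by
    intro k hk
    set a := T k with ha
    set b := T (k+1) with hb
    have hab : a < b := hTlt k hk
    have haS : a ∈ S := hTmem k (by omega)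
    have hbS : b ∈ S := hTmem (k+1) (by omega)
    have ha01 : a ∈ Set.Icc (0:ℝ) 1 := hSsub haS
    have hb01 : b ∈ Set.Icc (0:ℝ) 1 := hSsub hbS
    have habsub : Set.Icc a b ⊆ Set.Icc (0:ℝ) 1 :=
      Set.Icc_subset_Icc ha01.1 hb01.2
    -- find the f-piece containing [a,b]
    obtain ⟨i, hi, hia, hia'⟩ := exists_piece htlt (ht0 ▸ ha01.1)
      (htn ▸ lt_of_lt_of_le hab hb01.2)
    have hbi : b ≤ t (i + 1) := by
      by_contra h
      push_neg at h
      have hti1 : t (i+1) ∈ S := by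
        refine ⟨⟨?_, ?_⟩, Or.inl ⟨i+1, Set.mem_Iic.2 hi, rfl⟩⟩
        · rw [← ht0]; exact piece_mono htlt (Nat.zero_le _) hi
        · rw [← htn]; exact piece_mono htlt hi (le_refl n)
      exact hgap k hk _ hti1 ⟨hia', h⟩
    have hfmono : ∀ s ∈ Set.Icc a b, f s = α (i+1) * s ^ d (i+1) := by
      intro s hs
      exact hmf i hi s ⟨hia.trans hs.1, hs.2.trans hbi⟩
    -- find the g-piece containing [f a, f b]
    have hfa01 : f a ∈ Set.Icc (0:ℝ) 1 := hfb.mapsTo ha01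
    have hfb01 : f b ∈ Set.Icc (0:ℝ) 1 := hfb.mapsTo hb01
    have hfab : f a < f b := hfm ha01 hb01 hab
    obtain ⟨j, hj, hja, hja'⟩ := exists_piece hult (hu0 ▸ hfa01.1)
      (hum ▸ lt_of_lt_of_le hfab hfb01.2)
    have hbj : f b ≤ u (j + 1) := by
      by_contra h
      push_neg at h
      -- intermediate value: there is x ∈ (a, b) with f x = u (j+1)
      have hivt := intermediate_value_Icc (le_of_lt hab) (hfc.mono habsub)
      obtain ⟨x, hx, hfx⟩ := hivt ⟨le_of_lt hja', le_of_lt h⟩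
      have hx01 : x ∈ Set.Icc (0:ℝ) 1 := habsub hx
      have hxS : x ∈ S := ⟨hx01, Or.inr ⟨j+1, Set.mem_Iic.2 hj, hfx.symm⟩⟩
      have hxa : a < x := by
        rcases lt_or_eq_of_le hx.1 with h' | h'
        · exact h'
        · exfalso; rw [h', hfx] at hja'; exact lt_irrefl _ hja'
      have hxb : x < b := by
        rcases lt_or_eq_of_le hx.2 with h' | h'
        · exact h'
        · exfalso; rw [← h', hfx] at h; exact lt_irrefl _ h
      exact hgap k hk x hxS ⟨hxa, hxb⟩
    have hgmono : ∀ y ∈ Set.Icc (f a) (f b), g y = β (j+1) * y ^ e (j+1) := by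
      intro y hy
      exact hmg j hj y ⟨hja.trans hy.1, hy.2.trans hbj⟩
    obtain ⟨hαpos, hdpos⟩ := hαd i hi
    obtain ⟨hβpos, hepos⟩ := hβe j hj
    refine ⟨⟨β (j+1) * α (i+1) ^ e (j+1), d (i+1) * e (j+1)⟩,
      mul_pos hβpos (pow_pos hαpos _), Nat.mul_pos hdpos hepos, ?_⟩
    intro s hs
    have hs01 : s ∈ Set.Icc (0:ℝ) 1 := habsub hs
    have hfs : f s ∈ Set.Icc (f a) (f b) :=
      ⟨hfm.monotoneOn ha01 hs01 hs.1, hfm.monotoneOn hs01 hb01 hs.2⟩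
    simp only [Function.comp_apply]
    rw [hgmono (f s) hfs, hfmono s hs, mul_pow, ← pow_mul]
    ring
  choose! P hP1 hP2 hP3 using key
  refine ⟨⟨N, T, fun k => (P (k-1)).1, fun k => (P (k-1)).2, hN1, hT0, hTN, hTlt,
      fun i hi => by simpa using ⟨hP1 i hi, hP2 i hi⟩,
      fun i hi s hs => by simpa using hP3 i hi s hs⟩, ?_, ?_, ?_, ?_⟩
  · exact hgc.comp hfc hfb.mapsTo
  · exact fun x hx y hy hxy => hgm (hfb.mapsTo hx) (hfb.mapsTo hy) (hfm hx hy hxy)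
  · exact hgb.comp hfb
  · -- left degrees multiply
    rintro s ⟨hs0, hs1⟩ df dg ⟨a, ε, ha, hε, hf⟩ ⟨b, ε', hb, hε', hg⟩
    have hcont : ContinuousAt (fun v : ℝ => a * v ^ df) s := by fun_prop
    obtain ⟨δ, hδ, hδ'⟩ := Metric.continuousAt_iff.1 hcont ε' hε'
    set ε₂ : ℝ := min (min ε (s/2)) (δ/2) with hε₂
    have hε₂pos : 0 < ε₂ := lt_min (lt_min hε (by linarith)) (by linarith)
    refine ⟨b * a ^ dg, ε₂, mul_pos hb (pow_pos ha _), hε₂pos, ?_⟩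
    intro v hv
    have hv1 : v ∈ Set.Icc (s - ε) s :=
      ⟨by have := min_le_left (min ε (s/2)) (δ/2); have := min_le_left ε (s/2); linarith [hv.1], hv.2⟩
    have hvpos : 0 ≤ v := by
      have h1 : ε₂ ≤ s/2 := (min_le_left _ _).trans (min_le_right _ _)
      linarith [hv.1]
    have hfv : f v = a * v ^ df := hf v hv1
    have hfs : f s = a * s ^ df := hf s ⟨by linarith, le_refl _⟩
    have hfle : f v ≤ f s := by
      rw [hfv, hfs]
      exact mul_le_mul_of_nonneg_left (pow_le_pow_left₀ hvpos hv.2 df) (le_of_lt ha)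
    have hfge : f s - ε' < f v := by
      have hd : dist v s < δ := by
        rw [Real.dist_eq, abs_sub_lt_iff]
        have h2 : ε₂ ≤ δ/2 := min_le_right _ _
        constructor <;> [linarith [hv.2]; linarith [hv.1]]
      have := hδ' hd
      rw [Real.dist_eq, abs_sub_lt_iff] at this
      rw [hfv, hfs]; linarith [this.2]
    have hfvmem : f v ∈ Set.Icc (f s - ε') (f s) := ⟨le_of_lt hfge, hfle⟩
    have : g (f v) = b * (f v) ^ dg := hg (f v) hfvmem
    simp only [Function.comp_apply]
    rw [this, hfv, mul_pow, ← pow_mul]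
    ring_nf
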